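/- Fix integers m₁ > m₂ ≥ 2 with θ = log m₂/log m₁ irrational. For t ∈ [0,1) define Φ_t : [0,1]² → [0,1]² by Φ_t(z₁,z₂) = (m₁z₁ mod 1, m₂z₂ mod 1) if t ∈ [1−θ,1), and Φ_t(z₁,z₂) = (z₁, m₂z₂ mod 1) if t ∈ [0,1−θ). If ℓ is a line with slope m₁^t passing through [0,1]², then Φ_t(ℓ ∩ [0,1]²) is contained in a finite union of lines of slope m₁^{R_θ(t)}, where R_θ(t) = t + θ (mod 1). -/
import Mathlib


open Set Filter
noncomputable section

/-- The map `Φ_t` of `[0,1]²`: apply `T_{m₁} × T_{m₂}` if `t ∈ [1−θ,1)`,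
and `id × T_{m₂}` if `t ∈ [0,1−θ)`. -/
def phiMap (m₁ m₂ : ℕ) (θ t : ℝ) (z : ℝ × ℝ) : ℝ × ℝ :=
  if 1 - θ ≤ t then (Int.fract ((m₁ : ℝ) * z.1), Int.fract ((m₂ : ℝ) * z.2))
  else (z.1, Int.fract ((m₂ : ℝ) * z.2))

/-- The (non-vertical) line of slope `u` and intercept `b`. -/
def lineSl (u b : ℝ) : Set (ℝ × ℝ) := { p | p.2 = u * p.1 + b }

/-- `Φ_t` maps a line of slope `m₁^t` through `[0,1]²` into a finite
union of lines of slope `m₁^{R_θ(t)}`, where `R_θ(t) = t + θ (mod 1)`. -/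
theorem stmt11
    (m₁ m₂ : ℕ) (hm₂ : 2 ≤ m₂) (hm : m₂ < m₁)
    (θ : ℝ) (hθ : θ = Real.log m₂ / Real.log m₁) (hirr : Irrational θ)
    (t : ℝ) (ht : t ∈ Set.Ico (0 : ℝ) 1) (b : ℝ)
    (hmeets : (lineSl ((m₁ : ℝ) ^ t) b ∩ Set.Icc ((0 : ℝ), (0 : ℝ)) (1, 1)).Nonempty) :
    ∃ (N : ℕ) (bs : Fin N → ℝ),
      phiMap m₁ m₂ θ t '' (lineSl ((m₁ : ℝ) ^ t) b ∩ Set.Icc ((0 : ℝ), (0 : ℝ)) (1, 1)) ⊆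
        ⋃ i : Fin N, lineSl ((m₁ : ℝ) ^ Int.fract (t + θ)) (bs i) := by
  obtain ⟨ht0, ht1⟩ := ht
  have hm₁1 : (1:ℝ) < m₁ := by exact_mod_cast (by omega : 1 < m₁)
  have hm₂1 : (1:ℝ) < m₂ := by exact_mod_cast (by omega : 1 < m₂)
  have hm₁pos : (0:ℝ) < m₁ := by linarith
  have hm₂pos : (0:ℝ) < m₂ := by linarith
  have hm₁₂ : (m₂:ℝ) < m₁ := by exact_mod_cast hm
  have hlog₁ : 0 < Real.log m₁ := Real.log_pos hm₁1
  have hlog₂ : 0 < Real.log m₂ := Real.log_pos hm₂1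
  have hθ0 : 0 < θ := by rw [hθ]; exact div_pos hlog₂ hlog₁
  have hθ1 : θ < 1 := by
    rw [hθ]
    exact (div_lt_one hlog₁).mpr (Real.log_lt_log hm₂pos hm₁₂)
  have hm2θ : (m₁:ℝ) ^ θ = m₂ := by
    rw [hθ, Real.rpow_def_of_pos hm₁pos, mul_comm, div_mul_cancel₀ _ (ne_of_gt hlog₁),
      Real.exp_log hm₂pos]
  set s : ℝ := (m₁:ℝ) ^ Int.fract (t + θ) with hs_def
  refine ⟨(m₁+1)*(m₂+1),
    fun i => s * ((i / (m₂+1) : ℕ) : ℝ) + (m₂:ℝ) * b - ((i % (m₂+1) : ℕ) : ℝ), ?_⟩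
  rintro p ⟨z, ⟨hz_line, hz_box⟩, rfl⟩
  obtain ⟨⟨hx0, hy0⟩, ⟨hx1, hy1⟩⟩ := hz_box
  simp only [Prod.fst, Prod.snd] at hx0 hy0 hx1 hy1
  norm_num at hx0 hy0 hx1 hy1
  simp only [lineSl, Set.mem_setOf_eq] at hz_line
  -- the second-coordinate digit
  have hk₂0 : (0:ℤ) ≤ ⌊(m₂:ℝ) * z.2⌋ := Int.floor_nonneg.mpr (by positivity)
  have hk₂m : ⌊(m₂:ℝ) * z.2⌋ ≤ (m₂:ℤ) := by
    have h : (m₂:ℝ) * z.2 ≤ ((m₂:ℕ):ℝ) := by nlinarith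
    exact (Int.floor_mono h).trans_eq (Int.floor_natCast m₂)
  set n₂ : ℕ := (⌊(m₂:ℝ) * z.2⌋).toNat with hn₂def
  have hn₂cast : (n₂:ℝ) = (⌊(m₂:ℝ) * z.2⌋ : ℝ) := by
    rw [hn₂def]; exact_mod_cast congrArg Int.cast (Int.toNat_of_nonneg hk₂0)
  have hn₂le : n₂ ≤ m₂ := by omega
  have hfr₂ : Int.fract ((m₂:ℝ) * z.2) = (m₂:ℝ) * z.2 - n₂ := by
    rw [Int.fract, hn₂cast]
  by_cases hcase : 1 - θ ≤ t
  · -- apply both maps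
    have hfloor : ⌊t + θ⌋ = 1 := by
      rw [Int.floor_eq_iff]
      constructor <;> push_cast <;> linarith
    have hfr : Int.fract (t + θ) = t + θ - 1 := by
      rw [Int.fract, hfloor]; norm_num
    have hs : s * m₁ = (m₂:ℝ) * (m₁:ℝ) ^ t := by
      calc s * m₁ = (m₁:ℝ) ^ (t + θ - 1) * (m₁:ℝ) ^ (1:ℝ) := by
            rw [hs_def, hfr, Real.rpow_one]
        _ = (m₁:ℝ) ^ (t + θ) := by
            rw [← Real.rpow_add hm₁pos]; ring_nf
        _ = (m₁:ℝ) ^ t * (m₁:ℝ) ^ θ := Real.rpow_add hm₁pos t θ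
        _ = (m₂:ℝ) * (m₁:ℝ) ^ t := by rw [hm2θ]; ring
    have hk₁0 : (0:ℤ) ≤ ⌊(m₁:ℝ) * z.1⌋ := Int.floor_nonneg.mpr (by positivity)
    have hk₁m : ⌊(m₁:ℝ) * z.1⌋ ≤ (m₁:ℤ) := by
      have h : (m₁:ℝ) * z.1 ≤ ((m₁:ℕ):ℝ) := by nlinarith
      exact (Int.floor_mono h).trans_eq (Int.floor_natCast m₁)
    set n₁ : ℕ := (⌊(m₁:ℝ) * z.1⌋).toNat with hn₁def
    have hn₁cast : (n₁:ℝ) = (⌊(m₁:ℝ) * z.1⌋ : ℝ) := by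
      rw [hn₁def]; exact_mod_cast congrArg Int.cast (Int.toNat_of_nonneg hk₁0)
    have hn₁le : n₁ ≤ m₁ := by omega
    have hfr₁ : Int.fract ((m₁:ℝ) * z.1) = (m₁:ℝ) * z.1 - n₁ := by
      rw [Int.fract, hn₁cast]
    have hbound : n₂ + n₁ * (m₂ + 1) < (m₁+1)*(m₂+1) := by nlinarith
    refine Set.mem_iUnion.mpr ⟨⟨n₂ + n₁ * (m₂ + 1), hbound⟩, ?_⟩
    have hdiv : (n₂ + n₁ * (m₂ + 1)) / (m₂ + 1) = n₁ := by
      rw [Nat.add_mul_div_right _ _ (Nat.succ_pos m₂), Nat.div_eq_of_lt (by omega)]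
      omega
    have hmod : (n₂ + n₁ * (m₂ + 1)) % (m₂ + 1) = n₂ := by
      rw [Nat.add_mul_mod_self_right, Nat.mod_eq_of_lt (by omega)]
    simp only [lineSl, Set.mem_setOf_eq, phiMap, if_pos hcase, hdiv, hmod, hfr₁, hfr₂]
    linear_combination (m₂:ℝ) * hz_line - z.1 * hs
  · have hfr : Int.fract (t + θ) = t + θ :=
      Int.fract_eq_self.mpr ⟨by linarith, by linarith⟩
    have hs : s = (m₂:ℝ) * (m₁:ℝ) ^ t := by
      rw [hs_def, hfr, Real.rpow_add hm₁pos, hm2θ]; ring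
    have hbound : n₂ + 0 * (m₂ + 1) < (m₁+1)*(m₂+1) := by nlinarith
    refine Set.mem_iUnion.mpr ⟨⟨n₂ + 0 * (m₂ + 1), hbound⟩, ?_⟩
    have hdiv : (n₂ + 0 * (m₂ + 1)) / (m₂ + 1) = 0 := by
      simp [Nat.div_eq_of_lt (by omega : n₂ < m₂ + 1)]
    have hmod : (n₂ + 0 * (m₂ + 1)) % (m₂ + 1) = n₂ := by
      simp [Nat.mod_eq_of_lt (by omega : n₂ < m₂ + 1)]
    simp only [lineSl, Set.mem_setOf_eq, phiMap, if_neg hcase, hdiv, hmod, hfr₂]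
    push_cast
    linear_combination (m₂:ℝ) * hz_line - z.1 * hs
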